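/- Let A ∈ ℤ^{m×n} with rank(A) = m, b ∈ ℤ^m, c ∈ ℤ^n, and define the binary encoding length L := mn + m + n + Σ_{i,j} ⌈log₂(|A_{ij}| + 1)⌉ + Σ_i ⌈log₂(|c_i| + 1)⌉ + Σ_j ⌈log₂(|b_j| + 1)⌉. Let (x*, y*, s*) be an optimal basic primal–dual pair: A x* = b, x* ≥ 0, Aᵀ y* + s* = c, s* ≥ 0, (x*)ᵀ s* = 0, where x* is an extreme point of the primal feasible set {x ∈ ℝⁿ : A x = b, x ≥ 0} and (y*, s*) is an extreme point of the dual feasible set {(y, s) : Aᵀ y + s = c, s ≥ 0}. Then for every index i: if x*_i > 0 then x*_i ≥ 2^{−L}, and if s*_i > 0 then s*_i ≥ 2^{−L}. -/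

import Mathlib

open Matrix Finset Submodule

-- product of zpows
lemma kh_prod_zpow {α : Type*} (s : Finset α) (e : α → ℤ) :
    ∏ i ∈ s, (2:ℝ) ^ (e i) = 2 ^ (∑ i ∈ s, e i) := by
  induction s using Finset.cons_induction with
  | empty => simp
  | cons a s ha ih =>
    rw [Finset.prod_cons, Finset.sum_cons, ih, ← zpow_add₀ (two_ne_zero)]

lemma kh_one_le_prod {α : Type*} (s : Finset α) (f : α → ℝ)
    (h : ∀ i ∈ s, 1 ≤ f i) : 1 ≤ ∏ i ∈ s, f i := by
  calc (1:ℝ) = ∏ _i ∈ s, 1 := by simp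
  _ ≤ ∏ i ∈ s, f i := Finset.prod_le_prod (by simp) h

lemma kh_entry_le (a : ℤ) :
    1 + (|a| : ℝ) ≤ (2:ℝ) ^ (⌈Real.logb 2 ((|a| : ℝ) + 1)⌉ : ℤ) := by
  have ha : (0:ℝ) ≤ (|a| : ℝ) := by exact_mod_cast abs_nonneg a
  have hx : (1:ℝ) ≤ (|a| : ℝ) + 1 := by linarith
  have h0 : (0:ℝ) < (|a| : ℝ) + 1 := by linarith
  have h1 : ((|a| : ℝ) + 1) = (2:ℝ) ^ (Real.logb 2 ((|a| : ℝ) + 1)) :=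
    (Real.rpow_logb two_pos (by norm_num) h0).symm
  calc (1 + (|a| : ℝ)) = (|a| : ℝ) + 1 := by ring
  _ = (2:ℝ) ^ (Real.logb 2 ((|a| : ℝ) + 1)) := h1
  _ ≤ (2:ℝ) ^ ((⌈Real.logb 2 ((|a| : ℝ) + 1)⌉ : ℤ) : ℝ) :=
      Real.rpow_le_rpow_of_exponent_le one_le_two (Int.le_ceil _)
  _ = (2:ℝ) ^ (⌈Real.logb 2 ((|a| : ℝ) + 1)⌉ : ℤ) := Real.rpow_intCast 2 _

lemma kh_ceil_nonneg (a : ℤ) : 0 ≤ ⌈Real.logb 2 ((|a| : ℝ) + 1)⌉ := by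
  have ha : (0:ℝ) ≤ (|a| : ℝ) := by exact_mod_cast abs_nonneg a
  have : (0:ℝ) ≤ Real.logb 2 ((|a| : ℝ) + 1) :=
    Real.logb_nonneg one_lt_two (by linarith)
  exact Int.ceil_nonneg this

lemma kh_int_one_le_prod {α : Type*} (s : Finset α) (f : α → ℤ)
    (h : ∀ i ∈ s, 1 ≤ f i) : 1 ≤ ∏ i ∈ s, f i := by
  calc (1:ℤ) = ∏ _i ∈ s, 1 := by simp
  _ ≤ ∏ i ∈ s, f i := Finset.prod_le_prod (by simp) h

lemma kh_det_le {k : ℕ} (M : Matrix (Fin k) (Fin k) ℤ) :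
    |M.det| ≤ (k.factorial : ℤ) * ∏ p : Fin k × Fin k, (1 + |M p.1 p.2|) := by
  classical
  have hQ1 : ∀ (i : Fin k) (j : Fin k), |M i j| ≤ ∏ r : Fin k, (1 + |M r j|) := by
    intro i j
    have h1 : ∀ r : Fin k, (0:ℤ) ≤ 1 + |M r j| := fun r => by positivity
    rw [← Finset.mul_prod_erase Finset.univ _ (Finset.mem_univ i)]
    have : (1:ℤ) ≤ ∏ r ∈ Finset.univ.erase i, (1 + |M r j|) :=
      kh_int_one_le_prod _ _ (fun r _ => by linarith [abs_nonneg (M r j)])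
    calc |M i j| ≤ 1 + |M i j| := by linarith [abs_nonneg (M i j)]
    _ ≤ (1 + |M i j|) * ∏ r ∈ Finset.univ.erase i, (1 + |M r j|) :=
        le_mul_of_one_le_right (h1 i) this
  calc |M.det| = |∑ σ : Equiv.Perm (Fin k), Equiv.Perm.sign σ • ∏ i, M (σ i) i| := by
        rw [Matrix.det_apply]
  _ ≤ ∑ σ : Equiv.Perm (Fin k), |Equiv.Perm.sign σ • ∏ i, M (σ i) i| :=
        Finset.abs_sum_le_sum_abs _ _
  _ ≤ ∑ _σ : Equiv.Perm (Fin k), ∏ p : Fin k × Fin k, (1 + |M p.1 p.2|) := by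
        apply Finset.sum_le_sum
        intro σ _
        have hsign : |Equiv.Perm.sign σ • ∏ i, M (σ i) i| = |∏ i, M (σ i) i| := by
          rcases Int.units_eq_one_or (Equiv.Perm.sign σ) with h | h <;>
            simp [h, abs_neg]
        rw [hsign, Finset.abs_prod]
        rw [Fintype.prod_prod_type]
        calc ∏ i, |M (σ i) i| ≤ ∏ i : Fin k, ∏ r : Fin k, (1 + |M r i|) :=
              Finset.prod_le_prod (fun i _ => abs_nonneg _) (fun i _ => hQ1 (σ i) i)
        _ = ∏ r : Fin k, ∏ j : Fin k, (1 + |M r j|) := Finset.prod_comm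
  _ = (k.factorial : ℤ) * ∏ p : Fin k × Fin k, (1 + |M p.1 p.2|) := by
        rw [Finset.sum_const, Finset.card_univ, Fintype.card_perm, Fintype.card_fin,
          nsmul_eq_mul]

lemma kh_exists_rows {ι : Type*} [Fintype ι] {k : ℕ}
    (N : Matrix ι (Fin k) ℝ)
    (hinj : ∀ g : Fin k → ℝ, N.mulVec g = 0 → g = 0) :
    ∃ r : Fin k → ι, Function.Injective r ∧ (N.submatrix r id).det ≠ 0 := by
  classical
  have hinj' : Function.Injective N.mulVecLin := by
    rw [← LinearMap.ker_eq_bot]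
    apply (Submodule.eq_bot_iff _).2
    intro g hg
    exact hinj g hg
  have hrk : N.rank = k := by
    rw [Matrix.rank, LinearMap.finrank_range_of_inj hinj',
      Module.finrank_fintype_fun_eq_card, Fintype.card_fin]
  have hrows : Module.finrank ℝ (span ℝ (Set.range fun i => N i)) = k := by
    have := Matrix.rank_transpose N
    rw [hrk] at this
    rw [Matrix.rank_eq_finrank_span_cols] at this
    exact this
  have hspan : span ℝ (Set.range fun i => N i) = ⊤ := by
    apply Submodule.eq_top_of_finrank_eq
    rw [hrows, Module.finrank_fintype_fun_eq_card, Fintype.card_fin]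
  obtain ⟨s, hs_sub, hs_span, hs_li⟩ :=
    exists_linearIndependent ℝ (Set.range fun i => N i)
  rw [hspan] at hs_span
  have hs_fin : s.Finite := (Set.finite_range _).subset hs_sub
  have : Fintype s := hs_fin.fintype
  -- s is a basis of ℝ^k
  let B : Module.Basis s ℝ (Fin k → ℝ) := Module.Basis.mk hs_li (by rw [Subtype.range_coe, hs_span])
  have hcard : Fintype.card s = k := by
    rw [← Module.finrank_eq_card_basis B, Module.finrank_fintype_fun_eq_card,
      Fintype.card_fin]
  let e : Fin k ≃ s := (Fintype.equivFinOfCardEq hcard).symm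
  have hchoice : ∀ v : s, ∃ i : ι, N i = (v : Fin k → ℝ) := fun v => by
    obtain ⟨i, hi⟩ := hs_sub v.2
    exact ⟨i, hi⟩
  choose pick hpick using hchoice
  refine ⟨fun t => pick (e t), ?_, ?_⟩
  · intro t t' h
    apply e.injective
    apply Subtype.ext
    have h' : N (pick (e t)) = N (pick (e t')) := congrArg N h
    rw [← hpick (e t), ← hpick (e t')]
    exact h'
  · have hli : LinearIndependent ℝ (fun t : Fin k => ((e t : s) : Fin k → ℝ)) :=
      hs_li.comp e e.injective
    have hrowseq : (fun t : Fin k => (N.submatrix (fun t => pick (e t)) id) t)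
        = fun t : Fin k => ((e t : s) : Fin k → ℝ) := by
      funext t
      show N (pick (e t)) = _
      rw [hpick (e t)]
    have : LinearIndependent ℝ (fun t : Fin k => (N.submatrix (fun t => pick (e t)) id) t) := by
      rw [hrowseq]; exact hli
    have hunit := Matrix.linearIndependent_rows_iff_isUnit.mp this
    intro hdet
    have hud : IsUnit (N.submatrix (fun t => pick (e t)) id).det := (Matrix.isUnit_iff_isUnit_det _).mp hunit
    rw [hdet] at hud
    simp at hud

lemma kh_primal_indep {m n : ℕ} (Ar : Matrix (Fin m) (Fin n) ℝ) (br : Fin m → ℝ)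
    (xstar : Fin n → ℝ)
    (hxext : xstar ∈ Set.extremePoints ℝ
      {x : Fin n → ℝ | Ar.mulVec x = br ∧ ∀ i, 0 ≤ x i})
    (d : Fin n → ℝ) (hAd : Ar.mulVec d = 0) (hsupp : ∀ i, ¬ 0 < xstar i → d i = 0) :
    d = 0 := by
  classical
  obtain ⟨⟨hfeas, hpos⟩, hext⟩ := hxext
  by_contra hd
  have ht : (Finset.univ.filter fun i => d i ≠ 0).Nonempty := by
    rcases Function.ne_iff.mp hd with ⟨i, hi⟩
    exact ⟨i, by simpa using hi⟩
  set t := Finset.univ.filter fun i => d i ≠ 0 with htdef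
  set ε := t.inf' ht fun i => xstar i / |d i| with hε
  have hεpos : 0 < ε := by
    rw [hε, Finset.lt_inf'_iff]
    intro i hi
    have hdi : d i ≠ 0 := (Finset.mem_filter.mp hi).2
    have hxi : 0 < xstar i := by
      by_contra h
      exact hdi (hsupp i h)
    exact div_pos hxi (abs_pos.mpr hdi)
  have hbound : ∀ i, ε * |d i| ≤ xstar i := by
    intro i
    by_cases hdi : d i = 0
    · simp [hdi]; exact hpos i
    · have hit : i ∈ t := by simp [htdef, hdi]
      have := Finset.inf'_le (fun i => xstar i / |d i|) hit
      rw [← hε] at this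
      calc ε * |d i| ≤ (xstar i / |d i|) * |d i| :=
        mul_le_mul_of_nonneg_right this (abs_nonneg _)
      _ = xstar i := div_mul_cancel₀ _ (abs_ne_zero.mpr hdi)
  have habs : ∀ i, |ε * d i| ≤ xstar i := fun i => by
    rw [abs_mul, abs_of_pos hεpos]; exact hbound i
  have hmem : ∀ (σ : ℝ), |σ| = 1 → (fun i => xstar i + σ * ε * d i) ∈
      {x : Fin n → ℝ | Ar.mulVec x = br ∧ ∀ i, 0 ≤ x i} := by
    intro σ hσ
    constructor
    · have : (fun i => xstar i + σ * ε * d i) = xstar + (σ * ε) • d := by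
        funext i; simp [mul_assoc]
      rw [this, Matrix.mulVec_add, Matrix.mulVec_smul, hAd, hfeas]
      simp
    · intro i
      show 0 ≤ xstar i + σ * ε * d i
      have h1 : |σ * ε * d i| = |ε * d i| := by
        rw [mul_assoc, abs_mul, hσ, one_mul]
      have := neg_abs_le (σ * ε * d i)
      have h2 := habs i
      rw [← h1] at h2
      linarith
  have h₁ := hmem 1 (by norm_num)
  have h₂ := hmem (-1) (by norm_num)
  have hseg : xstar ∈ openSegment ℝ (fun i => xstar i + (-1) * ε * d i)
      (fun i => xstar i + 1 * ε * d i) := by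
    refine ⟨1/2, 1/2, by norm_num, by norm_num, by norm_num, ?_⟩
    funext i
    simp only [Pi.add_apply, Pi.smul_apply, smul_eq_mul]
    ring
  have heq := hext h₁ h₂ (by rw [openSegment_symm]; exact hseg)
  have : ∀ i, ε * d i = 0 := by
    intro i
    have := congrFun heq i
    simp only [one_mul] at this
    linarith
  apply hd
  funext i
  have := this i
  have : d i = 0 := by
    rcases mul_eq_zero.mp this with h | h
    · exact absurd h (ne_of_gt hεpos)
    · exact h
  simp [this]

lemma kh_dual_indep {m n : ℕ} (Ar : Matrix (Fin m) (Fin n) ℝ) (cr : Fin n → ℝ)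
    (ystar : Fin m → ℝ) (sstar : Fin n → ℝ)
    (hysext : (ystar, sstar) ∈ Set.extremePoints ℝ
      {p : (Fin m → ℝ) × (Fin n → ℝ) |
        Arᵀ.mulVec p.1 + p.2 = cr ∧ ∀ i, 0 ≤ p.2 i})
    (d : Fin m → ℝ) (hd0 : ∀ i, sstar i = 0 → Arᵀ.mulVec d i = 0) :
    d = 0 := by
  classical
  obtain ⟨⟨hfeas, hpos⟩, hext⟩ := hysext
  by_contra hd
  set u := Arᵀ.mulVec d with hu
  set t := Finset.univ.filter fun i => u i ≠ 0 with htdef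
  set ε := if ht : t.Nonempty then t.inf' ht fun i => sstar i / |u i| else 1 with hε
  have hspos : ∀ i, u i ≠ 0 → 0 < sstar i := by
    intro i hui
    rcases lt_or_eq_of_le (hpos i) with h | h
    · exact h
    · exact absurd (hd0 i h.symm) hui
  have hεpos : 0 < ε := by
    rw [hε]
    split
    · next ht =>
      rw [Finset.lt_inf'_iff]
      intro i hi
      have hui : u i ≠ 0 := (Finset.mem_filter.mp hi).2
      exact div_pos (hspos i hui) (abs_pos.mpr hui)
    · norm_num
  have hbound : ∀ i, ε * |u i| ≤ sstar i := by
    intro i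
    by_cases hui : u i = 0
    · simp [hui]; exact hpos i
    · have hit : i ∈ t := by simp [htdef, hui]
      have hne : t.Nonempty := ⟨i, hit⟩
      have hle : ε ≤ sstar i / |u i| := by
        rw [hε, dif_pos hne]
        exact Finset.inf'_le _ hit
      calc ε * |u i| ≤ (sstar i / |u i|) * |u i| :=
        mul_le_mul_of_nonneg_right hle (abs_nonneg _)
      _ = sstar i := div_mul_cancel₀ _ (abs_ne_zero.mpr hui)
  have hmem : ∀ (σ : ℝ), |σ| = 1 →
      ((fun j => ystar j + σ * ε * d j, fun i => sstar i - σ * ε * u i) :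
        (Fin m → ℝ) × (Fin n → ℝ)) ∈
      {p : (Fin m → ℝ) × (Fin n → ℝ) |
        Arᵀ.mulVec p.1 + p.2 = cr ∧ ∀ i, 0 ≤ p.2 i} := by
    intro σ hσ
    constructor
    · show Arᵀ.mulVec (fun j => ystar j + σ * ε * d j) +
        (fun i => sstar i - σ * ε * u i) = cr
      have h1 : (fun j => ystar j + σ * ε * d j) = ystar + (σ * ε) • d := by
        funext j; simp [mul_assoc]
      rw [h1, Matrix.mulVec_add, Matrix.mulVec_smul, ← hu, ← hfeas]
      funext i
      simp only [Pi.add_apply, Pi.smul_apply, smul_eq_mul]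
      ring
    · intro i
      show 0 ≤ sstar i - σ * ε * u i
      have h1 : |σ * ε * u i| = ε * |u i| := by
        rw [mul_assoc, abs_mul, hσ, one_mul, abs_mul, abs_of_pos hεpos]
      have h2 := hbound i
      have h3 := le_abs_self (σ * ε * u i)
      linarith
  have h₁ := hmem 1 (by norm_num)
  have h₂ := hmem (-1) (by norm_num)
  have hseg : (ystar, sstar) ∈ openSegment ℝ
      ((fun j => ystar j + (-1) * ε * d j, fun i => sstar i - (-1) * ε * u i) :
        (Fin m → ℝ) × (Fin n → ℝ))
      ((fun j => ystar j + 1 * ε * d j, fun i => sstar i - 1 * ε * u i) :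
        (Fin m → ℝ) × (Fin n → ℝ)) := by
    refine ⟨1/2, 1/2, by norm_num, by norm_num, by norm_num, ?_⟩
    apply Prod.ext
    · show ((1:ℝ)/2) • (fun j => ystar j + (-1) * ε * d j) +
        ((1:ℝ)/2) • (fun j => ystar j + 1 * ε * d j) = ystar
      funext j
      simp only [Pi.add_apply, Pi.smul_apply, smul_eq_mul]
      ring
    · show ((1:ℝ)/2) • (fun i => sstar i - (-1) * ε * u i) +
        ((1:ℝ)/2) • (fun i => sstar i - 1 * ε * u i) = sstar
      funext i
      simp only [Pi.add_apply, Pi.smul_apply, smul_eq_mul]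
      ring
  have heq := hext h₁ h₂ (by rw [openSegment_symm]; exact hseg)
  have heq1 := congrArg Prod.fst heq
  apply hd
  funext j
  have := congrFun heq1 j
  simp only [one_mul] at this
  have hεd : ε * d j = 0 := by linarith
  rcases mul_eq_zero.mp hεd with h | h
  · exact absurd h (ne_of_gt hεpos)
  · simpa using h

lemma kh_det_bound {m n k : ℕ} (A : Matrix (Fin m) (Fin n) ℤ)
    (r : Fin k → Fin m) (c : Fin k → Fin n)
    (hr : Function.Injective r) (hc : Function.Injective c) :
    (|(A.submatrix r c).det| : ℝ) ≤
      (2:ℝ) ^ ((m * n : ℤ) + ∑ i, ∑ j, ⌈Real.logb 2 ((|A i j| : ℝ) + 1)⌉) := by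
  classical
  set M := A.submatrix r c with hM
  have hkm : k ≤ m := Fintype.card_fin k ▸ Fintype.card_fin m ▸
    Fintype.card_le_of_injective r hr
  have hkn : k ≤ n := Fintype.card_fin k ▸ Fintype.card_fin n ▸
    Fintype.card_le_of_injective c hc
  -- factorial bound
  have hfact : (k.factorial : ℝ) ≤ 2 ^ (m * n : ℕ) := by
    have h1 : k.factorial ≤ 2 ^ (m * n) := by
      calc k.factorial ≤ k ^ k := Nat.factorial_le_pow k
      _ ≤ (2 ^ k) ^ k := Nat.pow_le_pow_left (Nat.le_of_lt (Nat.lt_two_pow_self (n := k))) k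
      _ = 2 ^ (k * k) := by rw [← pow_mul]
      _ ≤ 2 ^ (m * n) := Nat.pow_le_pow_right (by norm_num) (Nat.mul_le_mul hkm hkn)
    exact_mod_cast h1
  -- product over submatrix entries ≤ product over all entries
  set g : Fin m × Fin n → ℝ := fun p => 1 + (|A p.1 p.2| : ℝ) with hg
  have hg1 : ∀ p, 1 ≤ g p := fun p => by
    have : (0:ℝ) ≤ (|A p.1 p.2| : ℝ) := by exact_mod_cast abs_nonneg _
    simp only [hg]; linarith
  have hg0 : ∀ p, 0 ≤ g p := fun p => le_trans zero_le_one (hg1 p)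
  set f : Fin k × Fin k → Fin m × Fin n := fun p => (r p.1, c p.2) with hf
  have hfinj : Function.Injective f := fun p q h => by
    have h1 := congrArg Prod.fst h
    have h2 := congrArg Prod.snd h
    exact Prod.ext (hr h1) (hc h2)
  have hPQ : ∏ p : Fin k × Fin k, g (f p) ≤ ∏ p : Fin m × Fin n, g p := by
    rw [← Finset.prod_image (fun p _ q _ h => hfinj h)]
    rw [← Finset.prod_sdiff (Finset.subset_univ (Finset.univ.image f))]
    exact le_mul_of_one_le_left
      (Finset.prod_nonneg fun p _ => hg0 p)
      (kh_one_le_prod _ _ fun p _ => hg1 p)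
  -- each factor bound
  have hQ2 : ∏ p : Fin m × Fin n, g p ≤
      (2:ℝ) ^ (∑ i, ∑ j, ⌈Real.logb 2 ((|A i j| : ℝ) + 1)⌉) := by
    calc ∏ p : Fin m × Fin n, g p
        ≤ ∏ p : Fin m × Fin n,
            (2:ℝ) ^ (⌈Real.logb 2 ((|A p.1 p.2| : ℝ) + 1)⌉ : ℤ) :=
          Finset.prod_le_prod (fun p _ => hg0 p) (fun p _ => kh_entry_le _)
    _ = (2:ℝ) ^ (∑ p : Fin m × Fin n, ⌈Real.logb 2 ((|A p.1 p.2| : ℝ) + 1)⌉) :=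
          kh_prod_zpow _ _
    _ = (2:ℝ) ^ (∑ i, ∑ j, ⌈Real.logb 2 ((|A i j| : ℝ) + 1)⌉) := by
          rw [Fintype.sum_prod_type]
  -- combine
  have hint : (|M.det| : ℝ) ≤ (k.factorial : ℝ) * ∏ p : Fin k × Fin k, g (f p) := by
    have := kh_det_le M
    have h2 : (|M.det| : ℝ) ≤
        (((k.factorial : ℤ) * ∏ p : Fin k × Fin k, (1 + |M p.1 p.2|)) : ℝ) := by
      exact_mod_cast this
    push_cast at h2
    simpa [hg, hf, hM, Matrix.submatrix_apply, Int.cast_det] using h2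
  calc (|M.det| : ℝ) ≤ (k.factorial : ℝ) * ∏ p : Fin k × Fin k, g (f p) := hint
  _ ≤ (2:ℝ) ^ (m * n : ℕ) * ∏ p : Fin m × Fin n, g p := by
      apply mul_le_mul hfact hPQ (Finset.prod_nonneg fun p _ => hg0 (f p))
      positivity
  _ ≤ (2:ℝ) ^ (m * n : ℕ) * (2:ℝ) ^ (∑ i, ∑ j, ⌈Real.logb 2 ((|A i j| : ℝ) + 1)⌉) :=
      mul_le_mul_of_nonneg_left hQ2 (by positivity)
  _ = (2:ℝ) ^ ((m * n : ℤ) + ∑ i, ∑ j, ⌈Real.logb 2 ((|A i j| : ℝ) + 1)⌉) := by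
      rw [zpow_add₀ (two_ne_zero : (2:ℝ) ≠ 0)]
      norm_cast

lemma kh_primal_bound {m n : ℕ} (A : Matrix (Fin m) (Fin n) ℤ) (b : Fin m → ℤ)
    (xstar : Fin n → ℝ)
    (hPfeas : (A.map (Int.cast : ℤ → ℝ)).mulVec xstar = fun j => (b j : ℝ))
    (hxpos : ∀ i, 0 ≤ xstar i)
    (hxext : xstar ∈ Set.extremePoints ℝ
      {x : Fin n → ℝ |
        (A.map (Int.cast : ℤ → ℝ)).mulVec x = (fun j => (b j : ℝ)) ∧ ∀ i, 0 ≤ x i})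
    (i : Fin n) (hi : 0 < xstar i) :
    1 / ((2:ℝ) ^ ((m * n : ℤ) + ∑ i, ∑ j, ⌈Real.logb 2 ((|A i j| : ℝ) + 1)⌉)) ≤ xstar i := by
  classical
  set Ar := A.map (Int.cast : ℤ → ℝ) with hAr
  set S := Finset.univ.filter (fun i => 0 < xstar i) with hS
  set k := S.card with hk
  set e : Fin k ≃ {x // x ∈ S} := S.equivFin.symm with he
  set cS : Fin k → Fin n := fun t => ((e t : {x // x ∈ S}) : Fin n) with hcS
  have hcS_inj : Function.Injective cS :=
    Subtype.val_injective.comp e.injective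
  have hcS_mem : ∀ t, cS t ∈ S := fun t => (e t).2
  have hxS : ∀ j, j ∉ S → xstar j = 0 := by
    intro j hj
    have : ¬ 0 < xstar j := by
      intro h; exact hj (by simp [hS, h])
    linarith [hxpos j, not_lt.mp this]
  -- key sum identity
  have hsum : ∀ (f : Fin n → ℝ), (∀ j, j ∉ S → f j = 0) →
      ∑ j, f j = ∑ t : Fin k, f (cS t) := by
    intro f hf
    rw [← Finset.sum_subset (Finset.subset_univ S) (fun j _ hj => hf j hj)]
    rw [← Finset.sum_attach S f]
    exact (Fintype.sum_equiv e (fun t => f (cS t)) (fun x => f x) (fun t => rfl)).symm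
  -- column independence ⇒ N injective
  set N : Matrix (Fin m) (Fin k) ℝ := Ar.submatrix id cS with hN
  have hNinj : ∀ g : Fin k → ℝ, N.mulVec g = 0 → g = 0 := by
    intro g hg
    set d : Fin n → ℝ := fun j => if h : j ∈ S then g (e.symm ⟨j, h⟩) else 0 with hd
    have hdS : ∀ j, j ∉ S → d j = 0 := fun j hj => by simp [hd, hj]
    have hdc : ∀ t, d (cS t) = g t := by
      intro t
      have h : cS t ∈ S := hcS_mem t
      have : (⟨cS t, h⟩ : {x // x ∈ S}) = e t := Subtype.ext rfl
      simp only [hd, dif_pos h, this, Equiv.symm_apply_apply]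
    have hAd : Ar.mulVec d = 0 := by
      funext j
      have : (Ar.mulVec d) j = ∑ l, Ar j l * d l := rfl
      rw [this, hsum (fun l => Ar j l * d l) (fun l hl => by show Ar j l * d l = 0; rw [hdS l hl, mul_zero])]
      have : ∀ t, Ar j (cS t) * d (cS t) = N j t * g t := fun t => by
        rw [hdc t]; rfl
      simp_rw [this]
      exact congrFun hg j
    have hd0 : d = 0 := by
      apply kh_primal_indep Ar (fun j => (b j : ℝ)) xstar hxext d hAd
      intro l hl
      apply hdS
      simp [hS, hl]
    funext t
    have := congrFun hd0 (cS t)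
    rw [hdc t] at this
    exact this
  obtain ⟨r, hr_inj, hr_det⟩ := kh_exists_rows N hNinj
  -- the integer matrix
  set Q : Matrix (Fin k) (Fin k) ℤ := A.submatrix r cS with hQ
  have hQr : N.submatrix r id = Q.map (Int.cast : ℤ → ℝ) := by
    ext t t'; simp [hN, hQ, hAr, Matrix.submatrix_apply, Matrix.map_apply]
  have hdetcast : (N.submatrix r id).det = ((Q.det : ℤ) : ℝ) := by
    rw [hQr]
    exact ((Int.castRingHom ℝ).map_det Q).symm
  have hD : ((Q.det : ℤ) : ℝ) ≠ 0 := hdetcast ▸ hr_det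
  have hDz : Q.det ≠ 0 := fun h => hD (by rw [h]; simp)
  -- solve equation
  set v : Fin k → ℝ := fun t => xstar (cS t) with hv
  have hsolve : (N.submatrix r id).mulVec v = fun j => (b (r j) : ℝ) := by
    funext j
    have h1 : ((N.submatrix r id).mulVec v) j = ∑ t, Ar (r j) (cS t) * xstar (cS t) := rfl
    rw [h1, ← hsum (fun l => Ar (r j) l * xstar l)
      (fun l hl => by show Ar (r j) l * xstar l = 0; rw [hxS l hl, mul_zero])]
    exact congrFun hPfeas (r j)
  -- Cramer
  set z : Fin k → ℤ := Q.adjugate.mulVec (fun j => b (r j)) with hz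
  have hCram : ∀ t, ((Q.det : ℤ) : ℝ) * v t = ((z t : ℤ) : ℝ) := by
    intro t
    have h1 : (N.submatrix r id).adjugate.mulVec ((N.submatrix r id).mulVec v)
        = (N.submatrix r id).det • v := by
      rw [Matrix.mulVec_mulVec, Matrix.adjugate_mul, Matrix.smul_mulVec,
        Matrix.one_mulVec]
    rw [hsolve] at h1
    have h2 : (N.submatrix r id).adjugate = Q.adjugate.map (Int.cast : ℤ → ℝ) := by
      rw [hQr]
      have := (Int.castRingHom ℝ).map_adjugate Q
      simpa [RingHom.mapMatrix_apply] using this.symm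
    have h3 := congrFun h1 t
    rw [h2] at h3
    have h4 : ((Q.adjugate.map (Int.cast : ℤ → ℝ)).mulVec (fun j => (b (r j) : ℝ))) t
        = ((z t : ℤ) : ℝ) := by
      simp only [hz, Matrix.mulVec, dotProduct, Matrix.map_apply]
      push_cast
      rfl
    rw [h4] at h3
    rw [hdetcast] at h3
    simpa [Pi.smul_apply, smul_eq_mul] using h3.symm
  -- finish
  have hiS : i ∈ S := by simp [hS, hi]
  set t : Fin k := e.symm ⟨i, hiS⟩ with htdef
  have hct : cS t = i := by
    simp only [hcS, htdef, Equiv.apply_symm_apply]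
  have hxv : v t = xstar i := by rw [hv]; simp only [hct]
  have heq : ((Q.det : ℤ) : ℝ) * xstar i = ((z t : ℤ) : ℝ) := by
    rw [← hxv]; exact hCram t
  have hz0 : z t ≠ 0 := by
    intro h
    rw [h] at heq
    simp only [Int.cast_zero] at heq
    rcases mul_eq_zero.mp heq with h' | h'
    · exact hD h'
    · exact (ne_of_gt hi) h'
  have h1z : (1:ℝ) ≤ |((z t : ℤ) : ℝ)| := by
    rw [← Int.cast_abs]
    exact_mod_cast Int.one_le_abs hz0
  have hDbound : |((Q.det : ℤ) : ℝ)| ≤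
      (2:ℝ) ^ ((m * n : ℤ) + ∑ i, ∑ j, ⌈Real.logb 2 ((|A i j| : ℝ) + 1)⌉) := by
    exact kh_det_bound A r cS hr_inj hcS_inj
  have hDpos : (0:ℝ) < |((Q.det : ℤ) : ℝ)| := abs_pos.mpr hD
  have hxval : xstar i = ((z t : ℤ) : ℝ) / ((Q.det : ℤ) : ℝ) :=
    (eq_div_iff hD).mpr (by linarith [heq])
  calc 1 / ((2:ℝ) ^ ((m * n : ℤ) + ∑ i, ∑ j, ⌈Real.logb 2 ((|A i j| : ℝ) + 1)⌉))
      ≤ 1 / |((Q.det : ℤ) : ℝ)| := by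
        apply one_div_le_one_div_of_le hDpos hDbound
  _ ≤ |((z t : ℤ) : ℝ)| / |((Q.det : ℤ) : ℝ)| := by
        apply div_le_div_of_nonneg_right h1z hDpos.le
  _ = |xstar i| := by rw [hxval, abs_div]
  _ = xstar i := abs_of_pos hi

lemma kh_dual_bound {m n : ℕ} (A : Matrix (Fin m) (Fin n) ℤ) (c : Fin n → ℤ)
    (ystar : Fin m → ℝ) (sstar : Fin n → ℝ)
    (hDfeas : (A.map (Int.cast : ℤ → ℝ))ᵀ.mulVec ystar + sstar = fun i => (c i : ℝ))
    (hspos : ∀ i, 0 ≤ sstar i)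
    (hysext : (ystar, sstar) ∈ Set.extremePoints ℝ
      {p : (Fin m → ℝ) × (Fin n → ℝ) |
        (A.map (Int.cast : ℤ → ℝ))ᵀ.mulVec p.1 + p.2 = (fun i => (c i : ℝ)) ∧
        ∀ i, 0 ≤ p.2 i})
    (i : Fin n) (hi : 0 < sstar i) :
    1 / ((2:ℝ) ^ ((m * n : ℤ) + ∑ i, ∑ j, ⌈Real.logb 2 ((|A i j| : ℝ) + 1)⌉)) ≤ sstar i := by
  classical
  set Ar := A.map (Int.cast : ℤ → ℝ) with hAr
  set ι := {l : Fin n // sstar l = 0} with hι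
  set N : Matrix ι (Fin m) ℝ := Matrix.of (fun l j => Ar j l.1) with hN
  have hmulN : ∀ (g : Fin m → ℝ) (l : ι), (N.mulVec g) l = (Arᵀ.mulVec g) l.1 := by
    intro g l
    show ∑ j, Ar j l.1 * g j = ∑ j, Arᵀ l.1 j * g j
    simp [Matrix.transpose_apply]
  have hNinj : ∀ g : Fin m → ℝ, N.mulVec g = 0 → g = 0 := by
    intro g hg
    apply kh_dual_indep Ar (fun i => (c i : ℝ)) ystar sstar hysext g
    intro l hl
    have := congrFun hg ⟨l, hl⟩
    rw [hmulN g ⟨l, hl⟩] at this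
    exact this
  obtain ⟨r, hr_inj, hr_det⟩ := kh_exists_rows N hNinj
  set cT : Fin m → Fin n := fun j => (r j).1 with hcT
  have hcT_inj : Function.Injective cT := Subtype.val_injective.comp hr_inj
  have hsT : ∀ j, sstar (cT j) = 0 := fun j => (r j).2
  set Q : Matrix (Fin m) (Fin m) ℤ := (A.submatrix id cT)ᵀ with hQ
  have hQr : N.submatrix r id = Q.map (Int.cast : ℤ → ℝ) := by
    ext j j'
    simp [hN, hQ, hAr, hcT, Matrix.submatrix_apply, Matrix.map_apply, Matrix.transpose_apply]
  have hdetcast : (N.submatrix r id).det = ((Q.det : ℤ) : ℝ) := by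
    rw [hQr]; exact ((Int.castRingHom ℝ).map_det Q).symm
  have hD : ((Q.det : ℤ) : ℝ) ≠ 0 := hdetcast ▸ hr_det
  have hAy : ∀ l, (Arᵀ.mulVec ystar) l = (c l : ℝ) - sstar l := by
    intro l
    have := congrFun hDfeas l
    simp only [Pi.add_apply] at this
    linarith
  have hsolve : (N.submatrix r id).mulVec ystar = fun j => (c (cT j) : ℝ) := by
    funext j
    have h1 : ((N.submatrix r id).mulVec ystar) j = (N.mulVec ystar) (r j) := rfl
    rw [h1, hmulN ystar (r j), hAy (cT j), hsT j]
    ring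
  set z : Fin m → ℤ := Q.adjugate.mulVec (fun j => c (cT j)) with hz
  have hCram : ∀ j, ((Q.det : ℤ) : ℝ) * ystar j = ((z j : ℤ) : ℝ) := by
    intro j
    have h1 : (N.submatrix r id).adjugate.mulVec ((N.submatrix r id).mulVec ystar)
        = (N.submatrix r id).det • ystar := by
      rw [Matrix.mulVec_mulVec, Matrix.adjugate_mul, Matrix.smul_mulVec,
        Matrix.one_mulVec]
    rw [hsolve] at h1
    have h2 : (N.submatrix r id).adjugate = Q.adjugate.map (Int.cast : ℤ → ℝ) := by
      rw [hQr]
      have := (Int.castRingHom ℝ).map_adjugate Q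
      simpa [RingHom.mapMatrix_apply] using this.symm
    have h3 := congrFun h1 j
    rw [h2] at h3
    have h4 : ((Q.adjugate.map (Int.cast : ℤ → ℝ)).mulVec (fun j => (c (cT j) : ℝ))) j
        = ((z j : ℤ) : ℝ) := by
      simp only [hz, Matrix.mulVec, dotProduct, Matrix.map_apply]
      push_cast
      rfl
    rw [h4] at h3
    rw [hdetcast] at h3
    simpa [Pi.smul_apply, smul_eq_mul] using h3.symm
  -- the numerator for s_i
  set w : ℤ := c i * Q.det - ∑ j, A j i * z j with hw
  have hweq : ((Q.det : ℤ) : ℝ) * sstar i = ((w : ℤ) : ℝ) := by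
    have h1 : (Arᵀ.mulVec ystar) i = ∑ j, (A j i : ℝ) * ystar j := by
      show ∑ j, Arᵀ i j * ystar j = _
      apply Finset.sum_congr rfl
      intro j _
      simp [hAr, Matrix.transpose_apply, Matrix.map_apply]
    have h2 : ((Q.det : ℤ) : ℝ) * (Arᵀ.mulVec ystar) i = ∑ j, (A j i : ℝ) * ((z j : ℤ) : ℝ) := by
      rw [h1, Finset.mul_sum]
      apply Finset.sum_congr rfl
      intro j _
      rw [← hCram j]
      ring
    have h3 : sstar i = (c i : ℝ) - (Arᵀ.mulVec ystar) i := by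
      have := hAy i; linarith
    rw [h3, mul_sub, h2, hw]
    push_cast
    ring
  have hz0 : w ≠ 0 := by
    intro h
    rw [h] at hweq
    simp only [Int.cast_zero] at hweq
    rcases mul_eq_zero.mp hweq with h' | h'
    · exact hD h'
    · exact (ne_of_gt hi) h'
  have h1z : (1:ℝ) ≤ |((w : ℤ) : ℝ)| := by
    rw [← Int.cast_abs]
    exact_mod_cast Int.one_le_abs hz0
  have hDbound : |((Q.det : ℤ) : ℝ)| ≤
      (2:ℝ) ^ ((m * n : ℤ) + ∑ i, ∑ j, ⌈Real.logb 2 ((|A i j| : ℝ) + 1)⌉) := by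
    have hQd : Q.det = (A.submatrix id cT).det := by rw [hQ, Matrix.det_transpose]
    rw [hQd]
    exact kh_det_bound A id cT Function.injective_id hcT_inj
  have hDpos : (0:ℝ) < |((Q.det : ℤ) : ℝ)| := abs_pos.mpr hD
  have hsval : sstar i = ((w : ℤ) : ℝ) / ((Q.det : ℤ) : ℝ) :=
    (eq_div_iff hD).mpr (by linarith [hweq])
  calc 1 / ((2:ℝ) ^ ((m * n : ℤ) + ∑ i, ∑ j, ⌈Real.logb 2 ((|A i j| : ℝ) + 1)⌉))
      ≤ 1 / |((Q.det : ℤ) : ℝ)| := one_div_le_one_div_of_le hDpos hDbound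
  _ ≤ |((w : ℤ) : ℝ)| / |((Q.det : ℤ) : ℝ)| := div_le_div_of_nonneg_right h1z hDpos.le
  _ = |sstar i| := by rw [hsval, abs_div]
  _ = sstar i := abs_of_pos hi


/-- Khachiyan's lower bound on the nonzero coordinates of basic
(extreme point) optimal solutions of a linear optimization problem with
integer data: every positive coordinate of a basic optimal primal–dual pair is
at least `2^{−L}`, where `L` is the binary encoding length of the data. -/
theorem khachiyan_lower_bound
    {m n : ℕ}
    (A : Matrix (Fin m) (Fin n) ℤ) (b : Fin m → ℤ) (c : Fin n → ℤ)
    (hrank : (A.map (Int.cast : ℤ → ℝ)).rank = m)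
    (L : ℤ)
    (hL : L = (m * n + m + n : ℤ)
        + ∑ i, ∑ j, ⌈Real.logb 2 ((|A i j| : ℝ) + 1)⌉
        + ∑ i, ⌈Real.logb 2 ((|c i| : ℝ) + 1)⌉
        + ∑ j, ⌈Real.logb 2 ((|b j| : ℝ) + 1)⌉)
    (xstar : Fin n → ℝ) (ystar : Fin m → ℝ) (sstar : Fin n → ℝ)
    (hPfeas : (A.map (Int.cast : ℤ → ℝ)).mulVec xstar = fun j => (b j : ℝ))
    (hxpos : ∀ i, 0 ≤ xstar i)
    (hDfeas : (A.map (Int.cast : ℤ → ℝ))ᵀ.mulVec ystar + sstar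
        = fun i => (c i : ℝ))
    (hspos : ∀ i, 0 ≤ sstar i)
    (hcomp : ∑ i, xstar i * sstar i = 0)
    (hxext : xstar ∈ Set.extremePoints ℝ
        {x : Fin n → ℝ |
          (A.map (Int.cast : ℤ → ℝ)).mulVec x = (fun j => (b j : ℝ)) ∧
          ∀ i, 0 ≤ x i})
    (hysext : (ystar, sstar) ∈ Set.extremePoints ℝ
        {p : (Fin m → ℝ) × (Fin n → ℝ) |
          (A.map (Int.cast : ℤ → ℝ))ᵀ.mulVec p.1 + p.2 = (fun i => (c i : ℝ)) ∧
          ∀ i, 0 ≤ p.2 i}) :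
    ∀ i, (0 < xstar i → (2 : ℝ) ^ (-L) ≤ xstar i) ∧
         (0 < sstar i → (2 : ℝ) ^ (-L) ≤ sstar i) := by
  set E : ℤ := (m * n : ℤ) + ∑ i, ∑ j, ⌈Real.logb 2 ((|A i j| : ℝ) + 1)⌉ with hE
  have hEL : E ≤ L := by
    have hc' : 0 ≤ ∑ i, ⌈Real.logb 2 ((|c i| : ℝ) + 1)⌉ :=
      Finset.sum_nonneg fun i _ => kh_ceil_nonneg (c i)
    have hb' : 0 ≤ ∑ j, ⌈Real.logb 2 ((|b j| : ℝ) + 1)⌉ :=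
      Finset.sum_nonneg fun j _ => kh_ceil_nonneg (b j)
    have hm : (0:ℤ) ≤ m := Int.natCast_nonneg m
    have hn : (0:ℤ) ≤ n := Int.natCast_nonneg n
    rw [hL, hE]
    linarith
  have hpow : (2:ℝ) ^ (-L) ≤ 1 / (2:ℝ) ^ E := by
    rw [_root_.zpow_neg, one_div]
    apply inv_anti₀
    · positivity
    · exact zpow_le_zpow_right₀ one_le_two hEL
  intro i
  constructor
  · intro hi
    calc (2:ℝ) ^ (-L) ≤ 1 / (2:ℝ) ^ E := hpow
    _ ≤ xstar i := kh_primal_bound A b xstar hPfeas hxpos hxext i hi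
  · intro hi
    calc (2:ℝ) ^ (-L) ≤ 1 / (2:ℝ) ^ E := hpow
    _ ≤ sstar i := kh_dual_bound A c ystar sstar hDfeas hspos hysext i hi
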